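/- If A is an integer with A ≢ 0 (mod 9), A ≠ 1, A ≠ -1, and both A - 2 and A + 2 are squarefree, then the trinomial x^6 + A x^3 + 1 is irreducible over ℚ. -/

import Mathlib

open Polynomial

lemma rat_int_of_root {r : ℚ} (P : Polynomial ℤ) (hP : P.Monic) (hr : Polynomial.aeval r P = 0) :
    ∃ z : ℤ, (z : ℚ) = r := by
  obtain ⟨z, hz⟩ := IsIntegrallyClosed.isIntegral_iff.mp ⟨P, hP, hr⟩
  exact ⟨z, by simpa using hz⟩

lemma core_nt (A : ℤ) (h9 : ¬ (9:ℤ) ∣ A)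
    (hm : Squarefree (A - 2)) (hp : Squarefree (A + 2))
    (c d : ℚ)
    (hE1 : c^3 - 3*c*d^2 + (A:ℚ)*d^3 = 0)
    (hE2 : 3*c^2*d - 3*(A:ℚ)*c*d^2 + ((A:ℚ)^2-1)*d^3 = 1) : False := by
  set a : ℚ := (A:ℚ) with ha
  have hn3 : (c^2 - a*c*d + d^2)^3 = 1 := by
    linear_combination (c^3 - 3*c*d^2 + a*d^3 - a*(3*c^2*d - 3*a*c*d^2 + (a^2-1)*d^3)) * hE1
      + ((3*c^2*d - 3*a*c*d^2 + (a^2-1)*d^3) + 1) * hE2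
  have hn : c^2 - a*c*d + d^2 = 1 := by
    set n : ℚ := c^2 - a*c*d + d^2 with hnd
    have h0 : (n - 1) * (n^2 + n + 1) = 0 := by linear_combination hn3
    have h1 : n^2 + n + 1 > 0 := by nlinarith [sq_nonneg (n + 1/2)]
    have := mul_eq_zero.mp h0
    rcases this with h | h
    · linarith
    · linarith
  have ht : (2*c - a*d)^3 - 3*(2*c - a*d) + a = 0 := by
    linear_combination 2 * hE1 - a * hE2 + (3*(2*c - a*d)) * hn
  obtain ⟨z, hz⟩ := rat_int_of_root (r := 2*c - a*d) (X^3 - 3*X + C A) (by monicity!)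
    (by simp only [map_add, map_sub, map_pow, map_mul, aeval_X, aeval_C, map_ofNat, map_intCast, algebraMap_int_eq, eq_intCast]
        push_cast
        linear_combination ht)
  have hzz : z^3 - 3*z + A = 0 := by
    have : (z:ℚ)^3 - 3*(z:ℚ) + (A:ℚ) = 0 := by rw [hz]; linear_combination ht
    exact_mod_cast this
  have hA : A = 3*z - z^3 := by linarith
  have u1 : IsUnit (z - 1) := hm (z - 1) ⟨-(z+2), by linear_combination hA⟩
  have u2 : IsUnit (z + 1) := hp (z + 1) ⟨-(z-2), by linear_combination hA⟩
  rw [Int.isUnit_iff] at u1 u2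
  have hz0 : z = 0 := by omega
  rw [hz0] at hA
  exact h9 (by simp [hA] : (9:ℤ) ∣ A)

lemma quad_irred (A : ℤ) (hm : Squarefree (A - 2)) (hp : Squarefree (A + 2)) :
    Irreducible (X^2 + C (A:ℚ) * X + 1 : ℚ[X]) := by
  set q : ℚ[X] := X^2 + C (A:ℚ) * X + 1 with hq
  have hM : q.Monic := by rw [hq]; monicity!
  have hnd : q.natDegree = 2 := by rw [hq]; compute_degree!
  by_contra h
  obtain ⟨c₁, c₂, h0, h1⟩ := (hM.not_irreducible_iff_exists_add_mul_eq_coeff hnd).mp h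
  rw [hq] at h0 h1
  simp [coeff_one, coeff_X] at h0 h1
  -- h0 : 1 = c₁ * c₂, h1 : A = c₁ + c₂
  obtain ⟨z, hz⟩ := rat_int_of_root (r := c₁) (X^2 - C A * X + 1) (by monicity!)
    (by simp only [map_add, map_sub, map_pow, map_mul, aeval_X, aeval_C, map_one, map_intCast,
          algebraMap_int_eq, eq_intCast]
        linear_combination h0 + (-c₁) * h1)
  have hzz : z^2 - A*z + 1 = 0 := by
    have : (z:ℚ)^2 - A*(z:ℚ) + 1 = 0 := by
      rw [hz]; linear_combination h0 + (-c₁) * h1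
    exact_mod_cast this
  have : IsUnit z := isUnit_of_dvd_one ⟨A - z, by linear_combination hzz⟩
  rw [Int.isUnit_iff] at this
  rcases this with rfl | rfl
  · norm_num at hzz
    have h2 : A - 2 = 0 := by omega
    exact not_squarefree_zero (h2 ▸ hm)
  · norm_num at hzz
    have h2 : A + 2 = 0 := by omega
    exact not_squarefree_zero (h2 ▸ hp)


lemma adjoin_top_of_tower {F K L : Type*} [Field F] [Field K] [Field L]
    [Algebra F K] [Algebra K L] [Algebra F L] [IsScalarTower F K L]
    {β : K} {α : L} (hβtop : Algebra.adjoin F {β} = ⊤)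
    (hαtop : Algebra.adjoin K {α} = ⊤) (hα3 : α ^ 3 = algebraMap K L β) :
    Algebra.adjoin F {α} = ⊤ := by
  have hrange : ∀ k : K, algebraMap K L k ∈ Algebra.adjoin F {α} := by
    intro k
    have hk : k ∈ (⊤ : Subalgebra F K) := trivial
    rw [← hβtop] at hk
    have h2 : algebraMap K L k ∈ (Algebra.adjoin F {β}).map (IsScalarTower.toAlgHom F K L) :=
      ⟨k, hk, rfl⟩
    rw [AlgHom.map_adjoin, Set.image_singleton] at h2
    have h3 : (IsScalarTower.toAlgHom F K L) β = α ^ 3 := hα3.symm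
    rw [h3] at h2
    have hmem : α ∈ Algebra.adjoin F {α} := Algebra.subset_adjoin rfl
    have hmem3 : α ^ 3 ∈ Algebra.adjoin F {α} := pow_mem hmem 3
    exact Algebra.adjoin_le (Set.singleton_subset_iff.mpr hmem3) h2
  let S' : Subalgebra K L := { (Algebra.adjoin F {α}).toSubsemiring with algebraMap_mem' := hrange }
  have hmem' : α ∈ S' := Algebra.subset_adjoin (R := F) rfl
  have hle : Algebra.adjoin K {α} ≤ S' :=
    Algebra.adjoin_le (Set.singleton_subset_iff.mpr hmem')
  rw [eq_top_iff]
  intro x hx0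
  clear hx0
  have hx : x ∈ Algebra.adjoin K {α} := by rw [hαtop]; trivial
  exact hle hx

lemma irreducible_of_gen {F L : Type*} [Field F] [Field L] [Algebra F L]
    [FiniteDimensional F L] {α : L} (htopalg : Algebra.adjoin F {α} = ⊤) {f : F[X]}
    (hfM : f.Monic) (hfd : f.natDegree = Module.finrank F L) (hroot : Polynomial.aeval α f = 0) :
    Irreducible f := by
  have hint : IsIntegral F α := ⟨f, hfM, hroot⟩
  have htop : (IntermediateField.adjoin F {α} : IntermediateField F L) = ⊤ := by
    apply IntermediateField.toSubalgebra_injective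
    rw [IntermediateField.adjoin_simple_toSubalgebra_of_isAlgebraic hint.isAlgebraic, htopalg,
      IntermediateField.top_toSubalgebra]
  have hmindeg : (minpoly F α).natDegree = Module.finrank F L := by
    rw [← IntermediateField.adjoin.finrank hint, htop, IntermediateField.finrank_top']
  obtain ⟨u, hu⟩ := minpoly.dvd F α hroot
  have hmne : minpoly F α ≠ 0 := minpoly.ne_zero hint
  have hune : u ≠ 0 := fun h => by rw [h, mul_zero] at hu; exact hfM.ne_zero hu
  have hud : u.natDegree = 0 := by
    have := hu ▸ hfd
    rw [natDegree_mul hmne hune, hmindeg] at this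
    omega
  have hu1 : u = 1 := by
    have hlc := congrArg leadingCoeff hu
    rw [hfM.leadingCoeff, leadingCoeff_mul, (minpoly.monic hint).leadingCoeff, one_mul] at hlc
    rw [eq_C_of_natDegree_eq_zero hud, leadingCoeff_C] at hlc
    rw [eq_C_of_natDegree_eq_zero hud, ← hlc, C_1]
  have hfeq : f = minpoly F α := by rw [hu, hu1, mul_one]
  rw [hfeq]
  exact minpoly.irreducible hint

set_option maxHeartbeats 1000000 in
set_option synthInstance.maxHeartbeats 400000 in
theorem stmt6 (A : ℤ) (h9 : ¬ (9 ∣ A)) (h1 : A ≠ 1) (h1' : A ≠ -1)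
    (hm : Squarefree (A - 2)) (hp : Squarefree (A + 2)) :
    Irreducible (X ^ 6 + C (A : ℚ) * X ^ 3 + 1) := by
  set a : ℚ := (A : ℚ) with ha
  set q : ℚ[X] := X ^ 2 + C a * X + 1 with hq
  have hqM : q.Monic := by rw [hq]; monicity!
  have hqdeg : q.degree = 2 := by rw [hq]; compute_degree!
  have hq_irr : Irreducible q := quad_irred A hm hp
  haveI : Fact (Irreducible q) := ⟨hq_irr⟩
  set K := AdjoinRoot q with hK
  set β : K := AdjoinRoot.root q with hβ
  -- the cube condition
  have hcube : ∀ γ : K, γ ^ 3 ≠ β := by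
    intro γ hγ
    obtain ⟨g, rfl⟩ := AdjoinRoot.mk_surjective γ
    set r := g %ₘ q with hr_def
    set c := r.coeff 0 with hc
    set d := r.coeff 1 with hd
    have hdeg : r.natDegree ≤ 1 := by
      have h2 := degree_modByMonic_lt g hqM
      rw [hqdeg] at h2
      exact natDegree_le_iff_degree_le.mpr (by exact Order.lt_succ_iff.mp (by exact_mod_cast h2))
    have hr : r = C d * X + C c := eq_X_add_C_of_natDegree_le_one hdeg
    have hmk : AdjoinRoot.mk q g = AdjoinRoot.mk q r := by
      rw [AdjoinRoot.mk_eq_mk]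
      exact ⟨g /ₘ q, by have := modByMonic_add_div g q; rw [hr_def]; linear_combination -this⟩
    have hdvd : q ∣ r ^ 3 - X := by
      rw [← AdjoinRoot.mk_eq_zero, map_sub, map_pow, ← hmk, AdjoinRoot.mk_X, hγ, hβ, sub_self]
    have hkey : r ^ 3 - X = q * (C (3*c*d^2) + C (d^3) * (X - C a))
        + (C (c^3 - 3*c*d^2 + a*d^3) + C (3*c^2*d - 3*a*c*d^2 + (a^2-1)*d^3 - 1) * X) := by
      rw [hr, hq]
      simp only [C_add, C_sub, C_mul, C_pow, C_1, map_ofNat]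
      ring
    have hdvds : q ∣ C (c^3 - 3*c*d^2 + a*d^3)
        + C (3*c^2*d - 3*a*c*d^2 + (a^2-1)*d^3 - 1) * X :=
      (dvd_add_right ⟨_, rfl⟩).mp (hkey ▸ hdvd)
    have hsdeg : (C (c^3 - 3*c*d^2 + a*d^3)
        + C (3*c^2*d - 3*a*c*d^2 + (a^2-1)*d^3 - 1) * X).degree ≤ 1 := by
      compute_degree
    have hs0 : C (c^3 - 3*c*d^2 + a*d^3)
        + C (3*c^2*d - 3*a*c*d^2 + (a^2-1)*d^3 - 1) * X = 0 := by
      refine eq_zero_of_dvd_of_degree_lt hdvds ?_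
      rw [hqdeg]
      exact lt_of_le_of_lt hsdeg (by norm_num)
    have hE1 : c^3 - 3*c*d^2 + a*d^3 = 0 := by
      have := congrArg (fun p => coeff p 0) hs0
      simpa only [coeff_add, coeff_C_mul, coeff_C, coeff_X_zero, mul_zero, add_zero,
        coeff_zero, if_true] using this
    have hE2 : 3*c^2*d - 3*a*c*d^2 + (a^2-1)*d^3 = 1 := by
      have := congrArg (fun p => coeff p 1) hs0
      simp only [coeff_add, coeff_C_mul, coeff_C, coeff_X_one, mul_one, coeff_zero,
        if_neg one_ne_zero, zero_add] at this
      linarith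
    exact core_nt A h9 hm hp c d hE1 hE2
  -- the cubic extension
  have hβroot : β ^ 2 + AdjoinRoot.of q a * β + 1 = 0 := by
    have := AdjoinRoot.eval₂_root q
    rw [hq] at this
    simpa using this
  set p : K[X] := X ^ 3 - C β with hp_def
  have hp_irr : Irreducible p := X_pow_sub_C_irreducible_of_prime Nat.prime_three hcube
  haveI : Fact (Irreducible p) := ⟨hp_irr⟩
  set L := AdjoinRoot p with hL
  set α : L := AdjoinRoot.root p with hα
  have hα3 : α ^ 3 = algebraMap K L β := by
    have := AdjoinRoot.eval₂_root p
    rw [hp_def] at this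
    simp [AdjoinRoot.algebraMap_eq, sub_eq_zero] at this; exact this
  -- degrees
  have hqne : q ≠ 0 := hqM.ne_zero
  have hpne : p ≠ 0 := hp_irr.ne_zero
  have hqnd : q.natDegree = 2 := natDegree_eq_of_degree_eq_some hqdeg
  have hpnd : p.natDegree = 3 := by rw [hp_def]; compute_degree!
  haveI : FiniteDimensional ℚ K := (AdjoinRoot.powerBasis hqne).finite
  haveI : FiniteDimensional K L := (AdjoinRoot.powerBasis hpne).finite
  haveI : FiniteDimensional ℚ L := FiniteDimensional.trans ℚ K L
  have hfinK : Module.finrank ℚ K = 2 := by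
    rw [(AdjoinRoot.powerBasis hqne).finrank, AdjoinRoot.powerBasis_dim, hqnd]
  have hfinL : Module.finrank K L = 3 := by
    rw [(AdjoinRoot.powerBasis hpne).finrank, AdjoinRoot.powerBasis_dim, hpnd]
  have hfin6 : Module.finrank ℚ L = 6 := by
    rw [← Module.finrank_mul_finrank ℚ K L, hfinK, hfinL]
  set f : ℚ[X] := X ^ 6 + C a * X ^ 3 + 1 with hf
  have hfM : f.Monic := by rw [hf]; monicity!
  have hfd : f.natDegree = 6 := by rw [hf]; compute_degree!
  have hroot : aeval α f = 0 := by
    have h6 : α ^ 6 = algebraMap K L β ^ 2 := by rw [← hα3]; ring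
    rw [hf]
    simp only [map_add, map_mul, map_pow, aeval_X, aeval_C, map_one]
    rw [IsScalarTower.algebraMap_apply ℚ K L a, h6, hα3,
      ← map_pow, ← map_mul, ← map_one (algebraMap K L), ← map_add, ← map_add,
      show (algebraMap ℚ K) a = AdjoinRoot.of q a from rfl, hβroot, map_zero]
  exact irreducible_of_gen
    (adjoin_top_of_tower AdjoinRoot.adjoinRoot_eq_top AdjoinRoot.adjoinRoot_eq_top hα3)
    hfM (by rw [hfd, hfin6]) hroot
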